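/- For the scalar Gaussian source X ~ N(0,1), the asymptotic distortion-rate-perception function with rate R ≥ 0, common randomness rate C ≥ 0, and perception level P ≥ 0 satisfies D(R,C,P) = 2^{−2R} + [max(√(2 − 2^{−2R} − 2√((1 − 2^{−2R})(1 − 2^{−2(R+C)}))) − √P, 0)]²; in particular the expression under the outer square root is nonnegative, and D(R,C,P) is nonincreasing in each of R, C, and P. -/
import Mathlib


open Real

lemma amgm_sqrt {p q : ℝ} (hp : 0 ≤ p) (hq : 0 ≤ q) :
    Real.sqrt (p * q) ≤ (p + q) / 2 := by
  have h : p * q ≤ ((p + q)/2)^2 := by nlinarith [sq_nonneg (p - q)]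
  calc Real.sqrt (p*q) ≤ Real.sqrt (((p+q)/2)^2) := Real.sqrt_le_sqrt h
    _ = (p+q)/2 := Real.sqrt_sq (by linarith)

lemma key {a a' t : ℝ} (ht0 : 0 ≤ t) (ht1 : t ≤ 1) (ha'0 : 0 ≤ a')
    (haa : a' ≤ a) (ha1 : a ≤ 1) :
    2 - a' - 2 * Real.sqrt ((1 - a') * (1 - t * a')) ≤
    2 - a - 2 * Real.sqrt ((1 - a) * (1 - t * a)) := by
  set x := Real.sqrt ((1 - a) * (1 - t * a)) with hxdef
  set y := Real.sqrt ((1 - a') * (1 - t * a')) with hydef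
  have h1a : (0:ℝ) ≤ 1 - a := by linarith
  have h1ta : (0:ℝ) ≤ 1 - t * a := by nlinarith
  have h1a' : (0:ℝ) ≤ 1 - a' := by linarith
  have h1ta' : (0:ℝ) ≤ 1 - t * a' := by nlinarith
  have hx0 : 0 ≤ x := Real.sqrt_nonneg _
  have hy0 : 0 ≤ y := Real.sqrt_nonneg _
  have hx2 : x^2 = (1 - a) * (1 - t * a) := Real.sq_sqrt (mul_nonneg h1a h1ta)
  have hy2 : y^2 = (1 - a') * (1 - t * a') := Real.sq_sqrt (mul_nonneg h1a' h1ta')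
  have hta : t * a' ≤ t * a := mul_le_mul_of_nonneg_left haa ht0
  have hxy : x ≤ y := Real.sqrt_le_sqrt
    (mul_le_mul (by linarith) (by linarith) h1ta h1a')
  have hxb : x ≤ ((1-a) + (1-t*a)) / 2 := amgm_sqrt h1a h1ta
  have hyb : y ≤ ((1-a') + (1-t*a')) / 2 := amgm_sqrt h1a' h1ta'
  have hK : 0 ≤ 1 + t - t*(a+a') := by nlinarith
  have hsum : x + y ≤ 2*(1 + t - t*(a+a')) := by
    nlinarith [mul_nonneg (mul_nonneg ht0 (by linarith : (0:ℝ) ≤ 2 - (a+a'))) (by norm_num : (0:ℝ) ≤ 2),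
      mul_nonneg (add_nonneg ha'0 (le_trans ha'0 haa)) (by linarith : (0:ℝ) ≤ 1 - t)]
  have hdiff : (y - x)*(y + x) = (a - a') * (1 + t - t*(a+a')) := by
    linear_combination hy2 - hx2
  by_cases hKpos : 0 < 1 + t - t*(a+a')
  · have hprod : 0 ≤ (y - x) * (2*(1 + t - t*(a+a')) - (x+y)) :=
      mul_nonneg (by linarith) (by linarith)
    have h5eq : (2*(y-x) - (a-a')) * (1 + t - t*(a+a'))
        = (y - x) * (2*(1 + t - t*(a+a')) - (x+y)) := by linear_combination hdiff
    have h5 : 0 ≤ (2*(y-x) - (a-a')) * (1 + t - t*(a+a')) := h5eq ▸ hprod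
    have h6 : (0:ℝ) ≤ 2*(y-x) - (a-a') :=
      le_of_mul_le_mul_right (by linarith) hKpos
    linarith
  · have ht : t = 1 := by nlinarith
    have ha : a = 1 := by nlinarith
    have ha' : a' = 1 := by nlinarith
    linarith

lemma gmono {f f' p : ℝ} (h : f' ≤ f) :
    (max (Real.sqrt f' - p) 0)^2 ≤ (max (Real.sqrt f - p) 0)^2 :=
  pow_le_pow_left₀ (le_max_right _ _)
    (max_le_max (sub_le_sub_right (Real.sqrt_le_sqrt h) p) le_rfl) 2

/-- The closed-form scalar Gaussian distortion-rate-perception function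
`D(R,C,P) = 2^{−2R} + (max(√(2 − 2^{−2R} − 2√((1 − 2^{−2R})(1 − 2^{−2(R+C)}))) − √P, 0))²`. -/
noncomputable def DRCP (R C P : ℝ) : ℝ :=
  (2 : ℝ) ^ (-2 * R) +
    (max (Real.sqrt (2 - (2 : ℝ) ^ (-2 * R) -
        2 * Real.sqrt ((1 - (2 : ℝ) ^ (-2 * R)) * (1 - (2 : ℝ) ^ (-2 * (R + C))))) -
      Real.sqrt P) 0) ^ 2

lemma split (R C : ℝ) : (2:ℝ) ^ (-2 * (R + C)) = (2:ℝ) ^ (-2*C) * (2:ℝ) ^ (-2*R) := by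
  rw [← Real.rpow_add two_pos]; ring_nf

lemma rpow_le_one' {x : ℝ} (hx : 0 ≤ x) : (2:ℝ) ^ (-2 * x) ≤ 1 :=
  Real.rpow_le_one_of_one_le_of_nonpos one_le_two (by linarith)

lemma rpow_anti {x y : ℝ} (h : x ≤ y) : (2:ℝ) ^ (-2 * y) ≤ (2:ℝ) ^ (-2 * x) :=
  Real.rpow_le_rpow_of_exponent_le one_le_two (by linarith)

/-- For the scalar Gaussian source `N(0,1)` with rate `R ≥ 0`, common randomness rate `C ≥ 0`,
and perception level `P ≥ 0`: the expression under the outer square root in the closed-form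
distortion-rate-perception function is nonnegative, and `D(R,C,P)` is nonincreasing in each of
`R`, `C`, and `P`. -/
theorem stmt16 (R C P : ℝ) (hR : 0 ≤ R) (hC : 0 ≤ C) (hP : 0 ≤ P) :
    0 ≤ 2 - (2 : ℝ) ^ (-2 * R) -
        2 * Real.sqrt ((1 - (2 : ℝ) ^ (-2 * R)) * (1 - (2 : ℝ) ^ (-2 * (R + C)))) ∧
    (∀ R', R ≤ R' → DRCP R' C P ≤ DRCP R C P) ∧
    (∀ C', C ≤ C' → DRCP R C' P ≤ DRCP R C P) ∧
    (∀ P', P ≤ P' → DRCP R C P' ≤ DRCP R C P) := by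
  have ht0 : (0:ℝ) < (2:ℝ) ^ (-2*C) := Real.rpow_pos_of_pos two_pos _
  have ht1 : (2:ℝ) ^ (-2*C) ≤ 1 := rpow_le_one' hC
  have ha0 : (0:ℝ) < (2:ℝ) ^ (-2*R) := Real.rpow_pos_of_pos two_pos _
  have ha1 : (2:ℝ) ^ (-2*R) ≤ 1 := rpow_le_one' hR
  refine ⟨?_, ?_, ?_, ?_⟩
  · -- nonnegativity
    set a := (2:ℝ) ^ (-2*R)
    set b := (2:ℝ) ^ (-2*(R+C))
    have hb0 : (0:ℝ) < b := Real.rpow_pos_of_pos two_pos _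
    have hb1 : b ≤ 1 := rpow_le_one' (by linarith)
    have h1a : (0:ℝ) ≤ 1 - a := by linarith
    have h1b : (0:ℝ) ≤ 1 - b := by linarith
    rw [Real.sqrt_mul h1a]
    have hu2 : (Real.sqrt (1-a))^2 = 1 - a := Real.sq_sqrt h1a
    have hv2 : (Real.sqrt (1-b))^2 = 1 - b := Real.sq_sqrt h1b
    nlinarith [sq_nonneg (Real.sqrt (1-a) - Real.sqrt (1-b)), hb0]
  · -- monotone in R
    intro R' hRR
    unfold DRCP
    have ha'1 : (2:ℝ) ^ (-2*R') ≤ (2:ℝ) ^ (-2*R) := rpow_anti hRR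
    have ha'0 : (0:ℝ) < (2:ℝ) ^ (-2*R') := Real.rpow_pos_of_pos two_pos _
    rw [split R C, split R' C]
    exact add_le_add ha'1 (gmono (key (le_of_lt ht0) ht1 (le_of_lt ha'0) ha'1 ha1))
  · -- monotone in C
    intro C' hCC
    unfold DRCP
    have hb' : (2:ℝ) ^ (-2*(R+C')) ≤ (2:ℝ) ^ (-2*(R+C)) := rpow_anti (by linarith)
    have h1a : (0:ℝ) ≤ 1 - (2:ℝ) ^ (-2*R) := by linarith
    refine add_le_add le_rfl (gmono ?_)
    have : (1 - (2:ℝ) ^ (-2*(R+C))) * (1 - (2:ℝ) ^ (-2*R)) ≤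
        (1 - (2:ℝ) ^ (-2*(R+C'))) * (1 - (2:ℝ) ^ (-2*R)) :=
      mul_le_mul_of_nonneg_right (by linarith) h1a
    have hs := Real.sqrt_le_sqrt this
    rw [mul_comm (1 - (2:ℝ) ^ (-2*(R+C))), mul_comm (1 - (2:ℝ) ^ (-2*(R+C')))] at hs
    linarith
  · -- monotone in P
    intro P' hPP
    unfold DRCP
    refine add_le_add le_rfl
      (pow_le_pow_left₀ (le_max_right _ _)
        (max_le_max (sub_le_sub_left (Real.sqrt_le_sqrt hPP) _) le_rfl) 2)
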